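/- The function f₁(x) = 1/(ln(x) - ψ(x)) - 2x tends to -1/3 as x → ∞. -/

import Mathlib

open Real Filter Topology Set

noncomputable def digamma (x : ℝ) : ℝ := deriv Real.Gamma x / Real.Gamma x

noncomputable def trigamma (x : ℝ) : ℝ := deriv digamma x

private lemma gamma_diff {x : ℝ} (hx : 0 < x) : DifferentiableAt ℝ Real.Gamma x :=
  Real.differentiableAt_Gamma fun m => by
    have : -(m : ℝ) ≤ 0 := neg_nonpos.mpr (Nat.cast_nonneg m)
    linarith [hx]

private lemma digamma_eq {x : ℝ} (hx : 0 < x) :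
    digamma x = deriv (Real.log ∘ Real.Gamma) x := by
  rw [Function.comp_def, deriv.log (gamma_diff hx) (Real.Gamma_pos_of_pos hx).ne', digamma]

private lemma logGamma_diff {x : ℝ} (hx : 0 < x) :
    DifferentiableAt ℝ (Real.log ∘ Real.Gamma) x :=
  (gamma_diff hx).log (Real.Gamma_pos_of_pos hx).ne'

private lemma logGamma_add_one {x : ℝ} (hx : 0 < x) :
    (Real.log ∘ Real.Gamma) (x + 1) = Real.log x + (Real.log ∘ Real.Gamma) x := by
  simp only [Function.comp_apply, Real.Gamma_add_one hx.ne',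
    Real.log_mul hx.ne' (Real.Gamma_pos_of_pos hx).ne']

private lemma digamma_le_log {x : ℝ} (hx : 0 < x) : digamma x ≤ Real.log x := by
  rw [digamma_eq hx]
  have h := Real.convexOn_log_Gamma.deriv_le_slope (mem_Ioi.mpr hx)
    (mem_Ioi.mpr (by linarith : (0:ℝ) < x + 1)) (by linarith) (logGamma_diff hx)
  rw [slope_def_field, logGamma_add_one hx] at h
  simpa using h

private lemma log_le_digamma {x : ℝ} (hx : 1 < x) : Real.log (x - 1) ≤ digamma x := by
  have hx0 : 0 < x := by linarith
  have hx1 : 0 < x - 1 := by linarith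
  rw [digamma_eq hx0]
  have h := Real.convexOn_log_Gamma.slope_le_deriv (mem_Ioi.mpr hx1)
    (mem_Ioi.mpr hx0) (by linarith) (logGamma_diff hx0)
  have e : (Real.log ∘ Real.Gamma) x = Real.log (x - 1) + (Real.log ∘ Real.Gamma) (x - 1) := by
    have := logGamma_add_one hx1
    rwa [sub_add_cancel] at this
  rwa [slope_def_field, e, add_sub_cancel_right, sub_sub_cancel, div_one] at h

private lemma digamma_add_one {x : ℝ} (hx : 0 < x) :
    digamma (x + 1) = digamma x + 1 / x := by
  have hg : 0 < Real.Gamma x := Real.Gamma_pos_of_pos hx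
  have h2 : HasDerivAt (fun y : ℝ => Real.Gamma (y + 1)) (deriv Real.Gamma (x + 1)) x := by
    simpa [Function.comp_def] using (HasDerivAt.comp x (gamma_diff (by linarith : (0:ℝ) < x + 1)).hasDerivAt
      ((hasDerivAt_id x).add_const 1))
  have h3 : HasDerivAt (fun y : ℝ => y * Real.Gamma y)
      (1 * Real.Gamma x + x * deriv Real.Gamma x) x :=
    (hasDerivAt_id x).mul (gamma_diff hx).hasDerivAt
  have h4 : (fun y : ℝ => y * Real.Gamma y) =ᶠ[𝓝 x] (fun y : ℝ => Real.Gamma (y + 1)) := by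
    filter_upwards [eventually_gt_nhds hx] with y hy
    rw [Real.Gamma_add_one hy.ne']
  have h5 : HasDerivAt (fun y : ℝ => y * Real.Gamma y) (deriv Real.Gamma (x + 1)) x :=
    h2.congr_of_eventuallyEq h4
  have hd : deriv Real.Gamma (x + 1) = Real.Gamma x + x * deriv Real.Gamma x := by
    have := h5.unique h3; linarith [this]
  rw [digamma, digamma, hd, Real.Gamma_add_one hx.ne']
  field_simp
  ring

/-- Taylor bound for log(1+u). -/
private lemma log_taylor_bound {u : ℝ} (h0 : 0 < u) (h : u ≤ 1/2) :
    |Real.log (1 + u) - (u - u^2/2 + u^3/3 - u^4/4 + u^5/5 - u^6/6)| ≤ 2 * u^7 := by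
  have habs : |(-u : ℝ)| < 1 := by rw [abs_neg, abs_of_pos h0]; linarith
  have H := Real.abs_log_sub_add_sum_range_le habs 6
  have hsum : (∑ i ∈ Finset.range 6, (-u) ^ (i + 1) / (i + 1)) =
      -(u - u^2/2 + u^3/3 - u^4/4 + u^5/5 - u^6/6) := by
    simp [Finset.sum_range_succ]
    ring
  rw [hsum, sub_neg_eq_add, abs_neg, abs_of_pos h0] at H
  have h2 : u ^ (6+1) / (1 - u) ≤ 2 * u^7 := by
    rw [div_le_iff₀ (by linarith : (0:ℝ) < 1 - u), show (6+1)=7 from rfl]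
    have h7 : (0:ℝ) ≤ u^7 := pow_nonneg h0.le 7
    nlinarith [mul_nonneg h7 (by linarith : (0:ℝ) ≤ 1 - 2*u)]
  calc |Real.log (1 + u) - (u - u^2/2 + u^3/3 - u^4/4 + u^5/5 - u^6/6)|
      = |(-(u - u^2/2 + u^3/3 - u^4/4 + u^5/5 - u^6/6)) + Real.log (1 + u)| := by
        rw [← sub_eq_neg_add]
    _ ≤ u ^ (6+1) / (1 - u) := H
    _ ≤ 2 * u^7 := h2

private lemma step_upper {x : ℝ} (hx : 10 ≤ x) :
    1/x - Real.log (1 + 1/x) ≤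
      (1/(2*x) + 1/(12*x^2)) - (1/(2*(x+1)) + 1/(12*(x+1)^2)) := by
  have hx0 : (0:ℝ) < x := by linarith
  have hu0 : (0:ℝ) < 1/x := by positivity
  have hu : 1/x ≤ 1/2 := by
    rw [div_le_div_iff₀ hx0 two_pos]; linarith
  have H := (abs_le.mp (log_taylor_bound hu0 hu)).1
  have hlog : (1/x) - (1/x)^2/2 + (1/x)^3/3 - (1/x)^4/4 + (1/x)^5/5 - (1/x)^6/6 - 2*(1/x)^7
      ≤ Real.log (1 + 1/x) := by linarith
  have h1 : x ≠ 0 := hx0.ne'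
  have h2 : x + 1 ≠ 0 := by positivity
  have key : ((1/(2*x) + 1/(12*x^2)) - (1/(2*(x+1)) + 1/(12*(x+1)^2))
      - (1/x - ((1/x) - (1/x)^2/2 + (1/x)^3/3 - (1/x)^4/4 + (1/x)^5/5 - (1/x)^6/6 - 2*(1/x)^7)))
      * (60 * x^7 * (x+1)^2)
      = 3580 + 4890*(x-10) + 1042*(x-10)^2 + 79*(x-10)^3 + 2*(x-10)^4 := by
    field_simp
    ring
  have hy : (0:ℝ) ≤ x - 10 := by linarith
  have hN : (0:ℝ) ≤ 3580 + 4890*(x-10) + 1042*(x-10)^2 + 79*(x-10)^3 + 2*(x-10)^4 := by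
    have := pow_nonneg hy 2; have := pow_nonneg hy 3; have := pow_nonneg hy 4
    linarith
  have hM : (0:ℝ) < 60 * x^7 * (x+1)^2 := by positivity
  nlinarith [key, hN, hM, hlog, mul_pos hM (show (0:ℝ) < 1 by norm_num)]

private lemma step_lower {x : ℝ} (hx : 10 ≤ x) :
    (1/(2*x) + 1/(12*x^2) - 1/(10*x^3)) - (1/(2*(x+1)) + 1/(12*(x+1)^2) - 1/(10*(x+1)^3))
      ≤ 1/x - Real.log (1 + 1/x) := by
  have hx0 : (0:ℝ) < x := by linarith
  have hu0 : (0:ℝ) < 1/x := by positivity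
  have hu : 1/x ≤ 1/2 := by
    rw [div_le_div_iff₀ hx0 two_pos]; linarith
  have H := (abs_le.mp (log_taylor_bound hu0 hu)).2
  have hlog : Real.log (1 + 1/x)
      ≤ (1/x) - (1/x)^2/2 + (1/x)^3/3 - (1/x)^4/4 + (1/x)^5/5 - (1/x)^6/6 + 2*(1/x)^7 := by
    linarith
  have h1 : x ≠ 0 := hx0.ne'
  have h2 : x + 1 ≠ 0 := by positivity
  have key : ((1/x - ((1/x) - (1/x)^2/2 + (1/x)^3/3 - (1/x)^4/4 + (1/x)^5/5 - (1/x)^6/6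
        + 2*(1/x)^7))
      - ((1/(2*x) + 1/(12*x^2) - 1/(10*x^3)) - (1/(2*(x+1)) + 1/(12*(x+1)^2) - 1/(10*(x+1)^3))))
      * (60 * x^7 * (x+1)^3)
      = 19501180 + 11579510*(x-10) + 2859328*(x-10)^2 + 376089*(x-10)^3 + 27805*(x-10)^4
        + 1096*(x-10)^5 + 18*(x-10)^6 := by
    field_simp
    ring
  have hy : (0:ℝ) ≤ x - 10 := by linarith
  have hN : (0:ℝ) ≤ 19501180 + 11579510*(x-10) + 2859328*(x-10)^2 + 376089*(x-10)^3
      + 27805*(x-10)^4 + 1096*(x-10)^5 + 18*(x-10)^6 := by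
    have := pow_nonneg hy 2; have := pow_nonneg hy 3; have := pow_nonneg hy 4
    have := pow_nonneg hy 5; have := pow_nonneg hy 6
    linarith
  have hM : (0:ℝ) < 60 * x^7 * (x+1)^3 := by positivity
  nlinarith [key, hN, hM, hlog]

private lemma F_step {x : ℝ} (hx : 0 < x) :
    (Real.log x - digamma x) - (Real.log (x+1) - digamma (x+1))
      = 1/x - Real.log (1 + 1/x) := by
  rw [digamma_add_one hx, show (1 + 1/x) = (x+1)/x by field_simp,
    Real.log_div (by linarith) hx.ne']
  ring

private lemma F_tendsto {x : ℝ} (hx : 0 < x) :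
    Tendsto (fun N : ℕ => Real.log (x + N) - digamma (x + N)) atTop (𝓝 0) := by
  have t1 : Tendsto (fun N : ℕ => x + (N:ℝ) - 1) atTop atTop := by
    have := tendsto_atTop_add_const_right atTop (x - 1) tendsto_natCast_atTop_atTop
    refine this.congr fun N => by ring
  have t2 : Tendsto (fun N : ℕ => 1/(x + (N:ℝ) - 1)) atTop (𝓝 0) := by
    simpa [one_div, Pi.inv_def] using t1.inv_tendsto_atTop
  have t3 : Tendsto (fun N : ℕ => Real.log (1 + 1/(x + (N:ℝ) - 1))) atTop (𝓝 0) := by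
    have h4 : Tendsto (fun N : ℕ => 1 + 1/(x + (N:ℝ) - 1)) atTop (𝓝 1) := by
      simpa using tendsto_const_nhds.add t2
    have h5 := (Real.continuousAt_log (by norm_num : (1:ℝ) ≠ 0)).tendsto.comp h4
    simpa [Function.comp_def] using h5
  refine tendsto_of_tendsto_of_tendsto_of_le_of_le' tendsto_const_nhds t3 ?_ ?_
  · filter_upwards with N
    have h1 : (0:ℝ) < x + N := by positivity
    linarith [digamma_le_log h1]
  · filter_upwards [eventually_ge_atTop 2] with N hN
    have hN2 : (2:ℝ) ≤ (N:ℝ) := by exact_mod_cast hN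
    have h1 : (1:ℝ) < x + N := by linarith
    have h0 : (0:ℝ) < x + (N:ℝ) - 1 := by linarith
    have e : Real.log (x+N) - Real.log (x+N-1) = Real.log (1 + 1/(x+(N:ℝ)-1)) := by
      rw [show (1 + 1/(x+(N:ℝ)-1)) = (x+N)/(x+(N:ℝ)-1) by field_simp; ring,
        Real.log_div (by linarith) h0.ne']
    linarith [log_le_digamma h1, e.ge]

private lemma phi_tendsto : Tendsto (fun y : ℝ => 1/(2*y) + 1/(12*y^2)) atTop (𝓝 0) := by
  have h1 : Tendsto (fun y : ℝ => 1/(2*y)) atTop (𝓝 0) := by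
    simpa [one_div, mul_inv, mul_comm] using
      (tendsto_inv_atTop_zero.comp tendsto_id).const_mul (2:ℝ)⁻¹
  have h2 : Tendsto (fun y : ℝ => 1/(12*y^2)) atTop (𝓝 0) := by
    have : Tendsto (fun y : ℝ => y^2) atTop atTop := tendsto_pow_atTop two_ne_zero
    simpa [one_div, mul_inv, mul_comm] using (tendsto_inv_atTop_zero.comp this).const_mul (12:ℝ)⁻¹
  simpa using h1.add h2

private lemma cube_tendsto : Tendsto (fun y : ℝ => 1/(10*y^3)) atTop (𝓝 0) := by
  have : Tendsto (fun y : ℝ => y^3) atTop atTop := tendsto_pow_atTop three_ne_zero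
  simpa [one_div, mul_inv, mul_comm] using (tendsto_inv_atTop_zero.comp this).const_mul (10:ℝ)⁻¹

private lemma phiN_tendsto {x : ℝ} (hx : 0 < x) :
    Tendsto (fun N : ℕ => 1/(2*(x+(N:ℝ))) + 1/(12*(x+(N:ℝ))^2)) atTop (𝓝 0) := by
  have t1 : Tendsto (fun N : ℕ => x + (N:ℝ)) atTop atTop := by
    have := tendsto_atTop_add_const_right atTop x tendsto_natCast_atTop_atTop
    refine this.congr fun N => by ring
  exact phi_tendsto.comp t1

private lemma cubeN_tendsto {x : ℝ} (hx : 0 < x) :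
    Tendsto (fun N : ℕ => 1/(10*(x+(N:ℝ))^3)) atTop (𝓝 0) := by
  have t1 : Tendsto (fun N : ℕ => x + (N:ℝ)) atTop atTop := by
    have := tendsto_atTop_add_const_right atTop x tendsto_natCast_atTop_atTop
    refine this.congr fun N => by ring
  exact cube_tendsto.comp t1

private lemma F_upper {x : ℝ} (hx : 10 ≤ x) :
    Real.log x - digamma x ≤ 1/(2*x) + 1/(12*x^2) := by
  have hx0 : (0:ℝ) < x := by linarith
  have mono : ∀ N : ℕ, (Real.log x - digamma x) - (1/(2*x) + 1/(12*x^2))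
      ≤ (Real.log (x+(N:ℝ)) - digamma (x+(N:ℝ)))
        - (1/(2*(x+(N:ℝ))) + 1/(12*(x+(N:ℝ))^2)) := by
    intro N
    induction N with
    | zero => simp
    | succ n ih =>
      have hn0 : (0:ℝ) ≤ n := Nat.cast_nonneg n
      have hxn : 10 ≤ x + (n:ℝ) := by linarith
      have h1 := step_upper hxn
      have h2 := F_step (show (0:ℝ) < x + (n:ℝ) by linarith)
      push_cast
      rw [show x + ((n:ℝ)+1) = (x + (n:ℝ)) + 1 from by ring]
      linarith
  have lim : Tendsto (fun N : ℕ => (Real.log (x+(N:ℝ)) - digamma (x+(N:ℝ)))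
      - (1/(2*(x+(N:ℝ))) + 1/(12*(x+(N:ℝ))^2))) atTop (𝓝 0) := by
    simpa using (F_tendsto hx0).sub (phiN_tendsto hx0)
  linarith [ge_of_tendsto' lim mono]

private lemma F_lower {x : ℝ} (hx : 10 ≤ x) :
    1/(2*x) + 1/(12*x^2) - 1/(10*x^3) ≤ Real.log x - digamma x := by
  have hx0 : (0:ℝ) < x := by linarith
  have mono : ∀ N : ℕ, (Real.log (x+(N:ℝ)) - digamma (x+(N:ℝ)))
        - (1/(2*(x+(N:ℝ))) + 1/(12*(x+(N:ℝ))^2) - 1/(10*(x+(N:ℝ))^3))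
      ≤ (Real.log x - digamma x) - (1/(2*x) + 1/(12*x^2) - 1/(10*x^3)) := by
    intro N
    induction N with
    | zero => simp
    | succ n ih =>
      have hn0 : (0:ℝ) ≤ n := Nat.cast_nonneg n
      have hxn : 10 ≤ x + (n:ℝ) := by linarith
      have h1 := step_lower hxn
      have h2 := F_step (show (0:ℝ) < x + (n:ℝ) by linarith)
      push_cast
      rw [show x + ((n:ℝ)+1) = (x + (n:ℝ)) + 1 from by ring]
      linarith
  have lim : Tendsto (fun N : ℕ => (Real.log (x+(N:ℝ)) - digamma (x+(N:ℝ)))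
      - (1/(2*(x+(N:ℝ))) + 1/(12*(x+(N:ℝ))^2) - 1/(10*(x+(N:ℝ))^3))) atTop (𝓝 0) := by
    simpa using (F_tendsto hx0).sub ((phiN_tendsto hx0).sub (cubeN_tendsto hx0))
  linarith [le_of_tendsto' lim mono]

private lemma tendsto_upper :
    Tendsto (fun x : ℝ => 1/(1/(2*x) + 1/(12*x^2)) - 2*x) atTop (𝓝 (-1/3)) := by
  have e : ∀ᶠ x : ℝ in atTop, -2/(6+1/x) = 1/(1/(2*x) + 1/(12*x^2)) - 2*x := by
    filter_upwards [eventually_gt_atTop 0] with x hx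
    have h1 : x ≠ 0 := hx.ne'
    have h2 : (6:ℝ)*x + 1 ≠ 0 := by positivity
    field_simp
    ring
  have t0 : Tendsto (fun x : ℝ => 6 + 1/x) atTop (𝓝 6) := by
    simpa [one_div] using
      (tendsto_const_nhds : Tendsto (fun _ : ℝ => (6:ℝ)) atTop (𝓝 6)).add tendsto_inv_atTop_zero
  have t1 : Tendsto (fun x : ℝ => -2/(6+1/x)) atTop (𝓝 (-2/6)) :=
    tendsto_const_nhds.div t0 (by norm_num)
  have : (-2/6 : ℝ) = -1/3 := by norm_num
  rw [this] at t1
  exact t1.congr' e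

private lemma tendsto_lower :
    Tendsto (fun x : ℝ => 1/(1/(2*x) + 1/(12*x^2) - 1/(10*x^3)) - 2*x) atTop (𝓝 (-1/3)) := by
  have e : ∀ᶠ x : ℝ in atTop,
      (-10 + 12/x)/(30 + 5/x - 6/x^2) = 1/(1/(2*x) + 1/(12*x^2) - 1/(10*x^3)) - 2*x := by
    filter_upwards [eventually_ge_atTop 1] with x hx
    have hx0 : (0:ℝ) < x := by linarith
    have h1 : x ≠ 0 := hx0.ne'
    have h2 : (30:ℝ)*x^2 + 5*x - 6 ≠ 0 := by nlinarith
    have hrw : 1/(2*x) + 1/(12*x^2) - 1/(10*x^3) = (30*x^2+5*x-6)/(60*x^3) := by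
      field_simp; ring
    have hDrw : (30:ℝ) + 5/x - 6/x^2 = (30*x^2+5*x-6)/x^2 := by field_simp
    have hD : (30:ℝ) + 5/x - 6/x^2 ≠ 0 := by
      rw [hDrw]; exact div_ne_zero h2 (pow_ne_zero 2 h1)
    rw [hrw, one_div_div, div_eq_iff hD, hDrw, sub_mul, div_mul_div_comm, mul_comm (60*x^3),
      mul_div_mul_left _ _ h2]
    field_simp
    ring
  have t0 : Tendsto (fun x : ℝ => 30 + 5/x - 6/x^2) atTop (𝓝 30) := by
    have a1 : Tendsto (fun x : ℝ => 5/x) atTop (𝓝 0) := by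
      simpa [one_div, mul_inv, div_eq_mul_inv] using tendsto_inv_atTop_zero.const_mul (5:ℝ)
    have a2 : Tendsto (fun x : ℝ => 6/x^2) atTop (𝓝 0) := by
      have h : Tendsto (fun y : ℝ => y^2) atTop atTop := tendsto_pow_atTop two_ne_zero
      simpa [div_eq_mul_inv] using (tendsto_inv_atTop_zero.comp h).const_mul (6:ℝ)
    have := ((tendsto_const_nhds : Tendsto (fun _ : ℝ => (30:ℝ)) atTop (𝓝 30)).add a1).sub a2
    simpa using this
  have t1 : Tendsto (fun x : ℝ => (-10 + 12/x)/(30 + 5/x - 6/x^2)) atTop (𝓝 ((-10)/30)) := by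
    have a1 : Tendsto (fun x : ℝ => 12/x) atTop (𝓝 0) := by
      simpa [div_eq_mul_inv] using tendsto_inv_atTop_zero.const_mul (12:ℝ)
    have num : Tendsto (fun x : ℝ => -10 + 12/x) atTop (𝓝 (-10)) := by
      simpa using tendsto_const_nhds.add a1
    exact num.div t0 (by norm_num)
  have : ((-10)/30 : ℝ) = -1/3 := by norm_num
  rw [this] at t1
  exact t1.congr' e

theorem f1_tendsto :
    Tendsto (fun x : ℝ => 1 / (Real.log x - digamma x) - 2 * x) atTop (𝓝 (-1/3)) := by
  refine tendsto_of_tendsto_of_tendsto_of_le_of_le' tendsto_upper tendsto_lower ?_ ?_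
  · filter_upwards [eventually_ge_atTop 10] with x hx
    have hx0 : (0:ℝ) < x := by linarith
    have hF1 := F_upper hx
    have hF2 := F_lower hx
    have hphim : (0:ℝ) < 1/(2*x) + 1/(12*x^2) - 1/(10*x^3) := by
      have h1 : x ≠ 0 := hx0.ne'
      rw [show 1/(2*x) + 1/(12*x^2) - 1/(10*x^3) = (30*x^2 + 5*x - 6)/(60*x^3) from by
        field_simp; ring]
      exact div_pos (by nlinarith) (by positivity)
    have hFpos : (0:ℝ) < Real.log x - digamma x := lt_of_lt_of_le hphim hF2
    have := one_div_le_one_div_of_le hFpos hF1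
    linarith
  · filter_upwards [eventually_ge_atTop 10] with x hx
    have hx0 : (0:ℝ) < x := by linarith
    have hF1 := F_upper hx
    have hF2 := F_lower hx
    have hphim : (0:ℝ) < 1/(2*x) + 1/(12*x^2) - 1/(10*x^3) := by
      have h1 : x ≠ 0 := hx0.ne'
      rw [show 1/(2*x) + 1/(12*x^2) - 1/(10*x^3) = (30*x^2 + 5*x - 6)/(60*x^3) from by
        field_simp; ring]
      exact div_pos (by nlinarith) (by positivity)
    have := one_div_le_one_div_of_le hphim hF2
    linarith
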